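/- For all x, y in V, if Ω(x + y) = Ω(x) + Ω(y), then max(‖⟨x, y⟩‖_A, ‖θ_{x,y}‖) = 4 Ω(x) Ω(y), where θ_{x,y} : V → V is the bounded linear operator θ_{x,y}(z) = x⟨y, z⟩ and ‖θ_{x,y}‖ is its operator norm. -/

import Mathlib

/-!
Setting: `A` is a C*-algebra and `V` is a Hilbert C*-module over `A`.
`WithCStarModule A (A × V)` is the Hilbert `A`-module `A ⊕ V`, with inner product
`⟪(a, y), (b, z)⟫ = a * b + ⟪y, z⟫` and norm `‖(a, y)‖ = ‖a * a + ⟪y, y⟫‖ ^ (1/2)`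
(both provided by Mathlib).  For `x : V` and `lam : ℂ` with `|lam| = 1`, the operator
`M_{x,lam} : A ⊕ V → A ⊕ V`, `(a, y) ↦ (conj lam • ⟪x, y⟫, lam • (a • x))` is encoded
by a family `M` of continuous linear maps satisfying the predicate `IsM` below, and the
numerical radius is `numRadius M x = (1/2) * sup_{|lam| = 1} ‖M x lam‖`.
-/

open scoped RightActions InnerProductSpace

noncomputable section

variable {A V : Type*} [NonUnitalCStarAlgebra A] [PartialOrder A] [StarOrderedRing A]
  [NormedAddCommGroup V] [NormedSpace ℂ V] [SMul A V] [CStarModule A V] [CompleteSpace V]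

/-- The element of the Hilbert `A`-module `A ⊕ V` with components `a : A` and `y : V`. -/
def pairElem (a : A) (y : V) : WithCStarModule A (A × V) :=
  (WithCStarModule.equiv A (A × V)).symm (a, y)

/-- `IsM M` asserts that for every `x : V` and every unimodular `lam : ℂ`, the continuous
linear map `M x lam` is the operator `M_{x,lam} : (a, y) ↦ (conj lam • ⟪x, y⟫, lam • (a • x))`
on `A ⊕ V`. -/
def IsM (M : V → ℂ → (WithCStarModule A (A × V) →L[ℂ] WithCStarModule A (A × V))) : Prop :=
  ∀ (x : V) (lam : ℂ), ‖lam‖ = 1 → ∀ (a : A) (y : V),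
    M x lam (pairElem a y) = pairElem ((starRingEnd ℂ) lam • ⟪x, y⟫_A) (lam • (a • x))

/-- The numerical radius `Ω(x) = (1/2) * sup_{|lam| = 1} ‖M_{x,lam}‖`. -/
def numRadius (M : V → ℂ → (WithCStarModule A (A × V) →L[ℂ] WithCStarModule A (A × V)))
    (x : V) : ℝ :=
  (1 / 2) * sSup ((fun lam : ℂ => ‖M x lam‖) '' {lam : ℂ | ‖lam‖ = 1})

/-- `IsTheta Θ` asserts that for all `x y : V`, the continuous linear map `Θ x y` is the
"compact" operator `θ_{x,y} : V → V`, `z ↦ x <• ⟪y, z⟫`. -/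
def IsTheta (Θ : V → V → (V →L[ℂ] V)) : Prop :=
  ∀ (x y z : V), Θ x y z = ⟪y, z⟫_A • x

lemma inner_op_smul_self (x : V) (a : A) :
    ⟪a • x, a • x⟫_A = a * ⟪x, x⟫_A * star a := by
  rw [CStarModule.inner_op_smul_left, CStarModule.inner_op_smul_right, mul_assoc]

lemma norm_op_smul_le (x : V) (a : A) : ‖a • x‖ ≤ ‖x‖ * ‖a‖ := by
  have h1 : ‖a • x‖ ^ 2 ≤ (‖x‖ * ‖a‖) ^ 2 := by
    rw [CStarModule.norm_sq_eq A, inner_op_smul_self]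
    calc ‖a * ⟪x, x⟫_A * star a‖ ≤ ‖‖⟪x, x⟫_A‖ • (a * star a)‖ := by
          refine CStarAlgebra.norm_le_norm_of_nonneg_of_le ?_
            CStarAlgebra.star_right_conjugate_le_norm_smul
          exact star_right_conjugate_nonneg CStarModule.inner_self_nonneg a
      _ = ‖⟪x, x⟫_A‖ * ‖a * star a‖ := by
          rw [norm_smul, Real.norm_eq_abs, abs_of_nonneg (norm_nonneg _)]
      _ = (‖x‖ * ‖a‖) ^ 2 := by
          rw [← CStarModule.norm_sq_eq A, CStarRing.norm_self_mul_star]; ring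
  exact (pow_le_pow_iff_left₀ (norm_nonneg _) (by positivity) two_ne_zero).mp h1

lemma norm_M (M : V → ℂ → (WithCStarModule A (A × V) →L[ℂ] WithCStarModule A (A × V)))
    (hM : IsM M) (x : V) (lam : ℂ) (hlam : ‖lam‖ = 1) : ‖M x lam‖ = ‖x‖ := by
  have hc : (starRingEnd ℂ) lam * lam = 1 := by simp [Complex.conj_mul', hlam]
  have hc' : lam * (starRingEnd ℂ) lam = 1 := by rw [mul_comm]; exact hc
  refine le_antisymm ?_ ?_
  · refine (M x lam).opNorm_le_bound (norm_nonneg x) fun v => ?_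
    have hv : v = pairElem v.1 v.2 := rfl
    have hMv : M x lam v = pairElem ((starRingEnd ℂ) lam • ⟪x, v.2⟫_A) (lam • (v.1 • x)) := by
      conv_lhs => rw [hv]
      exact hM x lam hlam v.1 v.2
    have hsq : ‖M x lam v‖ ^ 2 ≤ (‖x‖ * ‖v‖) ^ 2 := by
      rw [hMv, CStarModule.norm_sq_eq A]
      have hinner : ⟪pairElem ((starRingEnd ℂ) lam • ⟪x, v.2⟫_A) (lam • (v.1 • x)),
          pairElem ((starRingEnd ℂ) lam • ⟪x, v.2⟫_A) (lam • (v.1 • x))⟫_A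
          = ⟪x, v.2⟫_A * ⟪v.2, x⟫_A + v.1 * ⟪x, x⟫_A * star v.1 := by
        show ((starRingEnd ℂ) lam • ⟪x, v.2⟫_A) * star ((starRingEnd ℂ) lam • ⟪x, v.2⟫_A)
            + ⟪lam • (v.1 • x), lam • (v.1 • x)⟫_A = _
        rw [star_smul, smul_mul_assoc, mul_smul_comm, smul_smul,
          CStarModule.inner_smul_left_complex, CStarModule.inner_smul_right_complex,
          smul_smul, inner_op_smul_self, CStarModule.star_inner]
        simp [Complex.star_def, hc, hc']
      rw [hinner]
      have hle : ⟪x, v.2⟫_A * ⟪v.2, x⟫_A + v.1 * ⟪x, x⟫_A * star v.1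
          ≤ (‖x‖ ^ 2) • (v.1 * star v.1 + ⟪v.2, v.2⟫_A) := by
        rw [smul_add, add_comm ((‖x‖ ^ 2 : ℝ) • (v.1 * star v.1))]
        gcongr
        · exact CStarModule.inner_mul_inner_swap_le
        · calc v.1 * ⟪x, x⟫_A * star v.1 ≤ ‖⟪x, x⟫_A‖ • (v.1 * star v.1) :=
              CStarAlgebra.star_right_conjugate_le_norm_smul CStarModule.isSelfAdjoint_inner_self
            _ = (‖x‖ ^ 2) • (v.1 * star v.1) := by rw [CStarModule.norm_sq_eq A]
      calc ‖⟪x, v.2⟫_A * ⟪v.2, x⟫_A + v.1 * ⟪x, x⟫_A * star v.1‖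
          ≤ ‖(‖x‖ ^ 2) • (v.1 * star v.1 + ⟪v.2, v.2⟫_A)‖ := by
            refine CStarAlgebra.norm_le_norm_of_nonneg_of_le ?_ hle
            refine add_nonneg ?_ (star_right_conjugate_nonneg
              CStarModule.inner_self_nonneg v.1)
            rw [← CStarModule.star_inner x v.2]
            exact mul_star_self_nonneg _
        _ = ‖x‖ ^ 2 * ‖v.1 * star v.1 + ⟪v.2, v.2⟫_A‖ := by
            rw [norm_smul, Real.norm_eq_abs, abs_of_nonneg (by positivity)]
        _ = (‖x‖ * ‖v‖) ^ 2 := by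
            rw [mul_pow, WithCStarModule.prod_norm_sq v,
              show (⟪v.1, v.1⟫_A : A) = v.1 * star v.1 from rfl]
    exact (pow_le_pow_iff_left₀ (norm_nonneg _) (by positivity) two_ne_zero).mp hsq
  · rcases eq_or_ne x 0 with rfl | hx
    · rw [norm_zero]; exact ContinuousLinearMap.opNorm_nonneg _
    have hxpos : (0:ℝ) < ‖x‖ := norm_pos_iff.mpr hx
    set a : A := ⟪x, x⟫_A with ha
    have hna : ‖a‖ = ‖x‖ ^ 2 := (CStarModule.norm_sq_eq A).symm
    have hsa : IsSelfAdjoint a := CStarModule.isSelfAdjoint_inner_self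
    -- ‖a • x‖ ≥ ‖x‖ ^ 3
    have hcube : ‖x‖ ^ 3 ≤ ‖a • x‖ := by
      have h4 : ‖a‖ ^ 4 ≤ ‖a * a * a‖ * ‖a‖ := by
        have e1 : ‖a * a‖ = ‖a‖ * ‖a‖ := by
          nth_rewrite 1 [← hsa.star_eq]
          exact CStarRing.norm_star_mul_self
        have e2 : ‖a * a * (a * a)‖ = ‖a * a‖ * ‖a * a‖ := by
          nth_rewrite 1 [show a * a * (a * a) = star (a * a) * (a * a) by
            rw [star_mul, hsa.star_eq]]
          exact CStarRing.norm_star_mul_self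
        calc ‖a‖ ^ 4 = ‖a * a * (a * a)‖ := by rw [e2, e1]; ring
          _ = ‖a * a * a * a‖ := by rw [← mul_assoc]
          _ ≤ ‖a * a * a‖ * ‖a‖ := norm_mul_le _ _
      have hanorm : (0:ℝ) < ‖a‖ := by rw [hna]; positivity
      have h3 : ‖a‖ ^ 3 ≤ ‖a * a * a‖ := by
        have := (mul_le_mul_iff_left₀ hanorm).mp (by calc ‖a‖ ^ 3 * ‖a‖ = ‖a‖ ^ 4 := by ring
          _ ≤ ‖a * a * a‖ * ‖a‖ := h4)
        exact this
      have hsq : (‖x‖ ^ 3) ^ 2 ≤ ‖a • x‖ ^ 2 := by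
        rw [CStarModule.norm_sq_eq A, inner_op_smul_self, hsa.star_eq, ← ha]
        calc (‖x‖ ^ 3) ^ 2 = ‖a‖ ^ 3 := by rw [hna]; ring
          _ ≤ ‖a * a * a‖ := h3
          _ = ‖a * a * a‖ := rfl
      nlinarith [norm_nonneg (a • x), pow_nonneg (norm_nonneg x) 3]
    have hMv : M x lam (pairElem a (0:V)) = pairElem ((starRingEnd ℂ) lam • ⟪x, (0:V)⟫_A)
        (lam • (a • x)) := hM x lam hlam a 0
    have hv2 : ‖lam • (a • x)‖ ≤ ‖M x lam (pairElem a (0:V))‖ := by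
      rw [hMv]
      exact (max_le_iff.mp (WithCStarModule.max_le_prod_norm
        (pairElem ((starRingEnd ℂ) lam • ⟪x, (0:V)⟫_A) (lam • (a • x))))).2
    have hnv : ‖pairElem a (0:V)‖ = ‖x‖ ^ 2 := by
      have : ‖pairElem a (0:V)‖ ^ 2 = ‖a * star a + ⟪(0:V), (0:V)⟫_A‖ :=
        WithCStarModule.prod_norm_sq _
      rw [CStarModule.inner_zero_left, add_zero, CStarRing.norm_self_mul_star, hna] at this
      nlinarith [norm_nonneg (pairElem a (0:V)), pow_nonneg (norm_nonneg x) 2]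
    have hlow : ‖x‖ ^ 3 ≤ ‖M x lam‖ * ‖x‖ ^ 2 := by
      calc ‖x‖ ^ 3 ≤ ‖a • x‖ := hcube
        _ = ‖lam • (a • x)‖ := by rw [norm_smul lam (a • x), hlam, one_mul]
        _ ≤ ‖M x lam (pairElem a (0:V))‖ := hv2
        _ ≤ ‖M x lam‖ * ‖pairElem a (0:V)‖ := (M x lam).le_opNorm _
        _ = ‖M x lam‖ * ‖x‖ ^ 2 := by rw [hnv]
    have h3 : ‖x‖ * ‖x‖ ^ 2 ≤ ‖M x lam‖ * ‖x‖ ^ 2 := by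
      calc ‖x‖ * ‖x‖ ^ 2 = ‖x‖ ^ 3 := by ring
        _ ≤ ‖M x lam‖ * ‖x‖ ^ 2 := hlow
    exact le_of_mul_le_mul_right h3 (by positivity)

lemma numRadius_eq (M : V → ℂ → (WithCStarModule A (A × V) →L[ℂ] WithCStarModule A (A × V)))
    (hM : IsM M) (x : V) : numRadius M x = ‖x‖ / 2 := by
  have himg : (fun lam : ℂ => ‖M x lam‖) '' {lam : ℂ | ‖lam‖ = 1} = {‖x‖} := by
    ext r
    simp only [Set.mem_image, Set.mem_setOf_eq, Set.mem_singleton_iff]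
    constructor
    · rintro ⟨lam, hlam, rfl⟩; exact norm_M M hM x lam hlam
    · rintro rfl; exact ⟨1, by simp, norm_M M hM x 1 (by simp)⟩
  rw [numRadius, himg, csSup_singleton]; ring

theorem stmt16 (M : V → ℂ → (WithCStarModule A (A × V) →L[ℂ] WithCStarModule A (A × V))) (hM : IsM M) (Θ : V → V → (V →L[ℂ] V)) (hΘ : IsTheta (A := A) Θ) (x y : V)
    (h : numRadius M (x + y) = numRadius M x + numRadius M y) :
    max ‖⟪x, y⟫_A‖ ‖Θ x y‖ = 4 * numRadius M x * numRadius M y := by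
  rw [numRadius_eq M hM x, numRadius_eq M hM y] at *
  rw [numRadius_eq M hM (x + y)] at h
  have hxy : ‖x + y‖ = ‖x‖ + ‖y‖ := by linarith
  have hup : ‖⟪x, y⟫_A‖ ≤ ‖x‖ * ‖y‖ := CStarModule.norm_inner_le V
  have hA : ‖⟪x, y⟫_A‖ = ‖x‖ * ‖y‖ := by
    refine le_antisymm hup ?_
    have hexp : ⟪x + y, x + y⟫_A = ⟪x, x⟫_A + ⟪y, y⟫_A + (⟪x, y⟫_A + ⟪y, x⟫_A) := by
      rw [CStarModule.inner_add_left, CStarModule.inner_add_right,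
        CStarModule.inner_add_right]
      abel
    have h1 : (‖x‖ + ‖y‖) ^ 2 = ‖⟪x + y, x + y⟫_A‖ := by
      rw [← hxy, ← CStarModule.norm_sq_eq A]
    have hyx : ‖⟪y, x⟫_A‖ = ‖⟪x, y⟫_A‖ := by
      rw [← CStarModule.star_inner x, norm_star]
    have h2 : ‖⟪x + y, x + y⟫_A‖ ≤ ‖x‖ ^ 2 + ‖y‖ ^ 2 + 2 * ‖⟪x, y⟫_A‖ := by
      rw [hexp]
      have t1 := norm_add_le (⟪x, x⟫_A + ⟪y, y⟫_A) (⟪x, y⟫_A + ⟪y, x⟫_A)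
      have t2 := norm_add_le ⟪x, x⟫_A ⟪y, y⟫_A
      have t3 := norm_add_le ⟪x, y⟫_A ⟪y, x⟫_A
      have e1 : ‖⟪x, x⟫_A‖ = ‖x‖ ^ 2 := (CStarModule.norm_sq_eq A).symm
      have e2 : ‖⟪y, y⟫_A‖ = ‖y‖ ^ 2 := (CStarModule.norm_sq_eq A).symm
      linarith
    nlinarith
  have hΘle : ‖Θ x y‖ ≤ ‖x‖ * ‖y‖ := by
    refine ContinuousLinearMap.opNorm_le_bound _ (by positivity) fun z => ?_
    rw [hΘ x y z]
    calc ‖⟪y, z⟫_A • x‖ ≤ ‖x‖ * ‖⟪y, z⟫_A‖ := norm_op_smul_le x _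
      _ ≤ ‖x‖ * (‖y‖ * ‖z‖) := by
          gcongr
          exact CStarModule.norm_inner_le V
      _ = ‖x‖ * ‖y‖ * ‖z‖ := by ring
  have hle' : ‖Θ x y‖ ≤ ‖⟪x, y⟫_A‖ := by rw [hA]; exact hΘle
  rw [max_eq_left hle', hA]
  ring
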